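/- arXiv:2507.13792 — 2 statements merged into one kernel-verified Lean document; each statement's English description precedes it below -/
import Mathlib

section
/- Let G be an acyclic grade graph. Then for all x, y ∈ V the set {p ∈ Paths(x,y) | w_G(p) ≠ 0} of paths from x to y with nonzero weight is finite. -/
open scoped Classical

/-- Weight of a path (nonempty list of vertices) in a grade graph. -/
def pathWeight {V R : Type*} [Semiring R] (G : V → V → R) : List V → R
  | [] => 1
  | [_] => 1
  | x :: y :: p => G x y * pathWeight G (y :: p)

/-- The set of non-source nodes of a grade graph. -/
def Nodes {V R : Type*} [Zero R] (G : V → V → R) : Set V := {y | ∃ x, G x y ≠ 0}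

/-- Paths from `x` to `y`: nonempty lists with head `x` and last element `y`. -/
def PathsBtw {V : Type*} (x y : V) : Set (List V) :=
  {p | p ≠ [] ∧ p.head? = some x ∧ p.getLast? = some y}

/-- A cycle: a path with more than one node and equal endpoints. -/
def IsCyclePath {V : Type*} (p : List V) : Prop := 1 < p.length ∧ p.head? = p.getLast?

/-- A grade graph is acyclic if every cycle has weight zero. -/
def Acyclic {V R : Type*} [Semiring R] (G : V → V → R) : Prop :=
  ∀ p : List V, IsCyclePath p → pathWeight G p = 0

/-- Reflexive and transitive closure of a grade graph:
`G*(x,y) = Σ_{p ∈ Paths(x,y)} w_G(p)`. -/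
noncomputable def gstar {V R : Type*} [Semiring R] (G : V → V → R) (x y : V) : R :=
  ∑ᶠ p ∈ PathsBtw x y, pathWeight G p

/-- Grade matrix multiplication. -/
noncomputable def matMul {V R : Type*} [Semiring R] (M₁ M₂ : V → V → R) (x y : V) : R :=
  ∑ᶠ z, M₁ x z * M₂ z y

/-- Identity grade matrix. -/
noncomputable def matId {V R : Type*} [Semiring R] (x y : V) : R := if x = y then 1 else 0

/-- `n`-fold product of a grade graph with itself, with `G⁰ = I`. -/
noncomputable def matPow {V R : Type*} [Semiring R] (G : V → V → R) : ℕ → V → V → R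
  | 0 => matId
  | n + 1 => matMul G (matPow G n)

/-- Multiplication of a grade context by a grade matrix:
`(γ·M)(x) = Σ_y γ(y)·M(y,x)`. -/
noncomputable def ctxMul {V R : Type*} [Semiring R] (γ : V → R) (M : V → V → R) (x : V) : R :=
  ∑ᶠ y, γ y * M y x

/-- A grade matrix: every row has finite support. -/
def RowFinite {V R : Type*} [Zero R] (M : V → V → R) : Prop :=
  ∀ x, {y | M x y ≠ 0}.Finite


lemma pathWeight_split {V R : Type*} [Semiring R] (G : V → V → R) :
    ∀ (a : List V) (v : V) (c : List V),
      pathWeight G (a ++ v :: c) = pathWeight G (a ++ [v]) * pathWeight G (v :: c)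
  | [], v, c => by simp [pathWeight]
  | [u], v, c => by simp [pathWeight]
  | u :: w :: a', v, c => by
    have ih := pathWeight_split G (w :: a') v c
    simp only [List.cons_append, List.append_eq, pathWeight] at *
    rw [ih, mul_assoc]

lemma pathWeight_nodup {V R : Type*} [Semiring R] {G : V → V → R} (hacyc : Acyclic G) :
    ∀ p : List V, pathWeight G p ≠ 0 → p.Nodup
  | [], _ => List.nodup_nil
  | x :: rest, hw => by
    have hrest : pathWeight G rest ≠ 0 := by
      intro h0
      cases rest with
      | nil => exact hw (by simpa [pathWeight] using h0)
      | cons y q => exact hw (by simp [pathWeight, h0])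
    refine List.nodup_cons.mpr ⟨?_, pathWeight_nodup hacyc rest hrest⟩
    intro hx
    obtain ⟨b, c, hbc⟩ := List.append_of_mem hx
    apply hw
    have hp : x :: rest = (x :: b) ++ x :: c := by simp [hbc]
    rw [hp, pathWeight_split]
    have hc : pathWeight G ((x :: b) ++ [x]) = 0 := by
      apply hacyc
      constructor
      · simp
      · rw [List.getLast?_concat]; rfl
    rw [hc, zero_mul]

lemma pathWeight_tail_mem {V R : Type*} [Semiring R] {G : V → V → R} :
    ∀ p : List V, pathWeight G p ≠ 0 → ∀ a ∈ p.tail, ∃ u, G u a ≠ 0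
  | [], _, a, ha => by simp at ha
  | [x], _, a, ha => by simp at ha
  | x :: y :: q, hw, a, ha => by
    have hxy : G x y ≠ 0 := fun h => hw (by simp [pathWeight, h])
    have hq : pathWeight G (y :: q) ≠ 0 := fun h => hw (by simp [pathWeight, h])
    rcases List.mem_cons.mp ha with h | h
    · exact ⟨x, h ▸ hxy⟩
    · exact pathWeight_tail_mem (y :: q) hq a h

/-- In an acyclic grade graph `G`, for all `x, y` the set of nonzero-weight paths
from `x` to `y` is finite. -/
theorem paths_nonzero_finite_of_acyclic {V R : Type*} [Semiring R] [PartialOrder R]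
    (hadd : ∀ a b c d : R, a ≤ b → c ≤ d → a + c ≤ b + d)
    (hmul : ∀ a b c d : R, a ≤ b → c ≤ d → a * c ≤ b * d)
    (hzero : ∀ r : R, r ≤ 0 → r = 0)
    (G : V → V → R) (hG : {q : V × V | G q.1 q.2 ≠ 0}.Finite)
    (hacyc : Acyclic G) :
    ∀ x y : V, {p ∈ PathsBtw x y | pathWeight G p ≠ 0}.Finite := by
  intro x y
  have hS : ({x} ∪ {a | ∃ u, G u a ≠ 0} : Set V).Finite := by
    apply (Set.finite_singleton x).union
    apply (hG.image Prod.snd).subset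
    rintro a ⟨u, hu⟩
    exact ⟨(u, a), hu, rfl⟩
  set S : Set V := {x} ∪ {a | ∃ u, G u a ≠ 0} with hSdef
  haveI := hS.fintype
  apply ((List.finite_length_le S (Fintype.card S)).image (List.map Subtype.val)).subset
  rintro p ⟨⟨hne, hhead, -⟩, hw⟩
  have hmem : ∀ a ∈ p, a ∈ S := by
    intro a ha
    cases p with
    | nil => simp at ha
    | cons z q =>
      rcases List.mem_cons.mp ha with h | h
      · left
        have : z = x := by simpa using hhead
        simp [h, this]
      · right
        exact pathWeight_tail_mem (z :: q) hw a h
  refine ⟨p.pmap (fun a ha => (⟨a, ha⟩ : S)) hmem, ?_, ?_⟩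
  · have hnd : p.Nodup := pathWeight_nodup hacyc p hw
    have hnd' : (p.pmap (fun a ha => (⟨a, ha⟩ : S)) hmem).Nodup := by
      apply List.Nodup.pmap _ hnd
      intro a ha b hb h
      simpa using congrArg Subtype.val h
    simpa using hnd'.length_le_card
  · simp [List.map_pmap]
end

section
/- Let G be an acyclic grade graph and let n be the cardinality of Nodes(G). Then G* = Σ_{i=0}^{n} Gⁱ, i.e., G*(x,y) = Σ_{i=0}^{n} Gⁱ(x,y) for all x, y ∈ V. -/
open scoped Classical

section Helpers

variable {V R : Type*} [Semiring R]

lemma pathWeight_cons_cons (G : V → V → R) (x y : V) (q : List V) :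
    pathWeight G (x :: y :: q) = G x y * pathWeight G (y :: q) := rfl

lemma pathWeight_append (G : V → V → R) (p : List V) (z : V) (q : List V) :
    pathWeight G (p ++ z :: q) = pathWeight G (p ++ [z]) * pathWeight G (z :: q) := by
  induction p with
  | nil => simp [pathWeight]
  | cons a p ih =>
    cases p with
    | nil =>
      simp only [List.nil_append, List.cons_append, pathWeight_cons_cons]
      simp [pathWeight, mul_assoc]
    | cons b p' =>
      simp only [List.cons_append] at *
      rw [pathWeight_cons_cons, pathWeight_cons_cons, ih, mul_assoc]

lemma exists_dup_decomp {α : Type*} (p : List α) (hp : ¬ p.Nodup) :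
    ∃ (z : α) (s t u : List α), p = s ++ z :: (t ++ z :: u) := by
  induction p with
  | nil => simp at hp
  | cons a q ih =>
    by_cases ha : a ∈ q
    · obtain ⟨t, u, rfl⟩ := List.append_of_mem ha
      exact ⟨a, [], t, u, rfl⟩
    · have hq : ¬ q.Nodup := fun h => hp (List.nodup_cons.mpr ⟨ha, h⟩)
      obtain ⟨z, s, t, u, rfl⟩ := ih hq
      exact ⟨z, a :: s, t, u, rfl⟩

lemma pathWeight_eq_zero_of_not_nodup (G : V → V → R) (hacyc : Acyclic G)
    (p : List V) (hp : ¬ p.Nodup) : pathWeight G p = 0 := by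
  obtain ⟨z, s, t, u, rfl⟩ := exists_dup_decomp p hp
  rw [pathWeight_append G s z (t ++ z :: u)]
  have h2 : pathWeight G (z :: (t ++ z :: u)) = pathWeight G ((z :: t) ++ z :: u) := rfl
  rw [h2, pathWeight_append G (z :: t) z u]
  have hcyc : pathWeight G ((z :: t) ++ [z]) = 0 := by
    apply hacyc
    constructor
    · simp
    · rw [show z :: t ++ [z] = (z :: t) ++ [z] from rfl, List.getLast?_concat]; rfl
  rw [hcyc, zero_mul, mul_zero]

lemma mem_nodes_of_pathWeight_ne_zero (G : V → V → R) :
    ∀ (p : List V), pathWeight G p ≠ 0 → ∀ a ∈ p.tail, a ∈ Nodes G := by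
  intro p
  induction p with
  | nil => simp
  | cons x q ih =>
    intro h a ha
    cases q with
    | nil => simp at ha
    | cons y q' =>
      rw [pathWeight_cons_cons] at h
      have hxy : G x y ≠ 0 := fun h0 => h (by rw [h0, zero_mul])
      have hq : pathWeight G (y :: q') ≠ 0 := fun h0 => h (by rw [h0, mul_zero])
      simp only [List.tail_cons] at ha
      rcases List.mem_cons.mp ha with rfl | ha'
      · exact ⟨x, hxy⟩
      · exact ih hq a ha'

lemma finite_length_eq {α : Type*} (W : Set α) (hW : W.Finite) :
    ∀ i, {p : List α | p.length = i ∧ ∀ a ∈ p, a ∈ W}.Finite := by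
  intro i
  induction i with
  | zero =>
    apply Set.Finite.subset (Set.finite_singleton ([] : List α))
    rintro p ⟨hp, -⟩
    simp [List.length_eq_zero_iff.mp hp]
  | succ i ih =>
    apply Set.Finite.subset ((hW.prod ih).image (fun q : α × List α => q.1 :: q.2))
    rintro p ⟨hp, hmem⟩
    cases p with
    | nil => simp at hp
    | cons a q =>
      refine ⟨(a, q), ⟨hmem a (by simp), ?_, fun b hb => hmem b (by simp [hb])⟩, rfl⟩
      simpa using hp

lemma nodes_finite (G : V → V → R) (hG : {q : V × V | G q.1 q.2 ≠ 0}.Finite) :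
    (Nodes G).Finite := by
  apply Set.Finite.subset (hG.image Prod.snd)
  rintro y ⟨x, hx⟩
  exact ⟨(x, y), hx, rfl⟩

lemma finite_paths_len (G : V → V → R) (hG : {q : V × V | G q.1 q.2 ≠ 0}.Finite)
    (x y : V) (i : ℕ) :
    ({p | p ∈ PathsBtw x y ∧ p.length = i} ∩ Function.support (pathWeight G)).Finite := by
  apply (finite_length_eq (insert x (Nodes G)) ((nodes_finite G hG).insert x) i).subset
  rintro p ⟨⟨⟨hne, hhead, -⟩, hlen⟩, hw⟩
  refine ⟨hlen, fun a ha => ?_⟩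
  cases p with
  | nil => exact absurd rfl hne
  | cons b q =>
    obtain rfl : b = x := by simpa using hhead
    rcases List.mem_cons.mp ha with rfl | ha'
    · exact Set.mem_insert _ _
    · exact Set.mem_insert_of_mem _ (mem_nodes_of_pathWeight_ne_zero G _ hw a ha')

lemma length_le_of_mem_paths (G : V → V → R) (hG : {q : V × V | G q.1 q.2 ≠ 0}.Finite)
    (hacyc : Acyclic G) {x y : V} {p : List V} (hp : p ∈ PathsBtw x y)
    (hw : pathWeight G p ≠ 0) : p.length ≤ (Nodes G).ncard + 1 := by
  have hnd : p.Nodup := by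
    by_contra h
    exact hw (pathWeight_eq_zero_of_not_nodup G hacyc p h)
  have htail : ∀ a ∈ p.tail, a ∈ Nodes G := mem_nodes_of_pathWeight_ne_zero G p hw
  have hfin := nodes_finite G hG
  have hbd : p.tail.length ≤ (Nodes G).ncard := by
    have hndt : p.tail.Nodup := hnd.tail
    have h1 : p.tail.toFinset.card = p.tail.length := List.toFinset_card_of_nodup hndt
    have h2 : p.tail.toFinset ⊆ hfin.toFinset := by
      intro a ha
      rw [Set.Finite.mem_toFinset]
      exact htail a (by simpa using ha)
    calc p.tail.length = p.tail.toFinset.card := h1.symm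
      _ ≤ hfin.toFinset.card := Finset.card_le_card h2
      _ = (Nodes G).ncard := (Set.ncard_eq_toFinset_card _ hfin).symm
  cases p with
  | nil => simp
  | cons a q => simpa using Nat.add_le_add_right hbd 1

end Helpers

section Main

variable {V R : Type*} [Semiring R]

lemma matPow_eq_finsum (G : V → V → R) (hG : {q : V × V | G q.1 q.2 ≠ 0}.Finite) :
    ∀ (i : ℕ) (x y : V), matPow G i x y =
      ∑ᶠ p ∈ {p | p ∈ PathsBtw x y ∧ p.length = i + 1}, pathWeight G p := by
  intro i
  induction i with
  | zero =>
    intro x y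
    by_cases hxy : x = y
    · subst hxy
      have hset : {p : List V | p ∈ PathsBtw x x ∧ p.length = 1} = {[x]} := by
        ext p
        constructor
        · rintro ⟨⟨hne, hh, hl⟩, h1⟩
          obtain ⟨a, rfl⟩ := List.length_eq_one_iff.mp h1
          obtain rfl : a = x := by simpa using hh
          rfl
        · rintro rfl
          exact ⟨⟨by simp, rfl, rfl⟩, rfl⟩
      rw [hset, finsum_mem_singleton]
      simp [matPow, matId, pathWeight]
    · have hset : {p : List V | p ∈ PathsBtw x y ∧ p.length = 1} = ∅ := by
        ext p
        simp only [Set.mem_setOf_eq, Set.mem_empty_iff_false, iff_false, not_and]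
        rintro ⟨hne, hh, hl⟩ h1
        obtain ⟨a, rfl⟩ := List.length_eq_one_iff.mp h1
        obtain rfl : a = x := by simpa using hh
        exact hxy (by simpa using hl)
      rw [hset, finsum_mem_empty]
      simp [matPow, matId, hxy]
  | succ i ih =>
    intro x y
    have hrow : {z | G x z ≠ 0}.Finite :=
      (hG.image Prod.snd).subset (fun z hz => ⟨(x, z), hz, rfl⟩)
    set Fx : Finset V := hrow.toFinset with hFx
    set Q : V → Finset (List V) := fun z => (finite_paths_len G hG z y (i + 1)).toFinset
      with hQdef
    have hstepA : matPow G (i + 1) x y = ∑ z ∈ Fx, G x z * matPow G i z y := by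
      show matMul G (matPow G i) x y = _
      apply finsum_eq_sum_of_support_subset
      intro z hz
      simp only [Function.mem_support] at hz
      simp only [hFx, Finset.coe_sort_coe, Set.Finite.coe_toFinset, Set.mem_setOf_eq]
      intro h0
      exact hz (by rw [h0, zero_mul])
    have hQ : ∀ z, matPow G i z y = ∑ p ∈ Q z, pathWeight G p := fun z => by
      rw [ih z y]
      exact finsum_mem_eq_sum _ (finite_paths_len G hG z y (i + 1))
    have hQmem : ∀ z, ∀ p ∈ Q z, p ∈ PathsBtw z y ∧ p.length = i + 1 ∧ pathWeight G p ≠ 0 := by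
      intro z p hp
      rw [hQdef, Set.Finite.mem_toFinset] at hp
      exact ⟨hp.1.1, hp.1.2, hp.2⟩
    have hw_cons : ∀ (z : V) (p : List V), p.head? = some z →
        G x z * pathWeight G p = pathWeight G (x :: p) := by
      intro z p hp
      cases p with
      | nil => simp at hp
      | cons b r =>
        obtain rfl : b = z := by simpa using hp
        rfl
    have hgetLast : ∀ (a : V) (p : List V), p ≠ [] → (a :: p).getLast? = p.getLast? := by
      intro a p hp
      cases p with
      | nil => exact absurd rfl hp
      | cons b r => exact List.getLast?_cons_cons
    rw [hstepA]
    simp_rw [hQ, Finset.mul_sum]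
    rw [Finset.sum_sigma' Fx Q (fun z p => G x z * pathWeight G p)]
    have hterm : ∀ q ∈ Fx.sigma Q, G x q.1 * pathWeight G q.2 = pathWeight G (x :: q.2) := by
      intro q hq
      rw [Finset.mem_sigma] at hq
      exact hw_cons q.1 q.2 (hQmem q.1 q.2 hq.2).1.2.1
    rw [Finset.sum_congr rfl hterm]
    have hinj : ∀ q ∈ Fx.sigma Q, ∀ q' ∈ Fx.sigma Q,
        (x :: q.2 : List V) = x :: q'.2 → q = q' := by
      intro q hq q' hq' h
      rw [Finset.mem_sigma] at hq hq'
      have h2 : q.2 = q'.2 := by simpa using h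
      have h1 : q.1 = q'.1 := by
        have e1 := (hQmem q.1 q.2 hq.2).1.2.1
        have e2 := (hQmem q'.1 q'.2 hq'.2).1.2.1
        rw [h2, e2] at e1
        exact (Option.some_injective _ e1).symm
      exact Sigma.ext h1 (heq_of_eq (by rw [h2]))
    rw [← Finset.sum_image hinj]
    have hTsub : (finite_paths_len G hG x y (i + 1 + 1)).toFinset ⊆
        (Fx.sigma Q).image (fun q => x :: q.2) := by
      intro p hp
      rw [Set.Finite.mem_toFinset] at hp
      obtain ⟨⟨⟨hne, hh, hl⟩, hlen⟩, hw⟩ := hp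
      cases p with
      | nil => exact absurd rfl hne
      | cons a q =>
        obtain rfl : x = a := (show a = x by simpa using hh).symm
        cases q with
        | nil => simp at hlen
        | cons b q' =>
          rw [Function.mem_support, pathWeight_cons_cons] at hw
          have hxb : G x b ≠ 0 := fun h0 => hw (by rw [h0, zero_mul])
          have hwq : pathWeight G (b :: q') ≠ 0 := fun h0 => hw (by rw [h0, mul_zero])
          refine Finset.mem_image.mpr ⟨⟨b, b :: q'⟩, Finset.mem_sigma.mpr ⟨?_, ?_⟩, rfl⟩
          · rw [hFx, Set.Finite.mem_toFinset]; exact hxb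
          · rw [hQdef, Set.Finite.mem_toFinset]
            refine ⟨⟨⟨by simp, rfl, ?_⟩, by simpa using hlen⟩, hwq⟩
            rw [List.getLast?_cons_cons] at hl
            exact hl
    have hz0 : ∀ p ∈ (Fx.sigma Q).image (fun q => x :: q.2),
        p ∉ (finite_paths_len G hG x y (i + 1 + 1)).toFinset → pathWeight G p = 0 := by
      intro p hpim hpT
      by_contra hw
      apply hpT
      rw [Set.Finite.mem_toFinset]
      obtain ⟨q, hq, rfl⟩ := Finset.mem_image.mp hpim
      rw [Finset.mem_sigma] at hq
      obtain ⟨⟨hne', hh', hl'⟩, hlen', -⟩ := hQmem q.1 q.2 hq.2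
      refine ⟨⟨⟨by simp, rfl, ?_⟩, by simp [hlen']⟩, hw⟩
      rw [hgetLast x q.2 hne']
      exact hl'
    rw [← Finset.sum_subset hTsub hz0]
    exact (finsum_mem_eq_sum _ (finite_paths_len G hG x y (i + 1 + 1))).symm

end Main

theorem gstar_eq_sum_pows' {V R : Type*} [Semiring R]
    (G : V → V → R) (hG : {q : V × V | G q.1 q.2 ≠ 0}.Finite)
    (hacyc : Acyclic G) :
    ∀ x y : V, gstar G x y = ∑ i ∈ Finset.range ((Nodes G).ncard + 1), matPow G i x y := by
  intro x y
  set n := (Nodes G).ncard with hn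
  have hfinAll : (PathsBtw x y ∩ Function.support (pathWeight G)).Finite := by
    apply Set.Finite.subset (Set.Finite.biUnion (Set.finite_Iic (n + 1))
      (fun i _ => finite_paths_len G hG x y i))
    rintro p ⟨hp, hw⟩
    have hle := length_le_of_mem_paths G hG hacyc hp hw
    exact Set.mem_biUnion (Set.mem_Iic.mpr hle) ⟨⟨hp, rfl⟩, hw⟩
  have hmaps : ∀ p ∈ hfinAll.toFinset, p.length - 1 ∈ Finset.range (n + 1) := by
    intro p hp
    rw [Set.Finite.mem_toFinset] at hp
    have h2 := length_le_of_mem_paths G hG hacyc hp.1 hp.2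
    rw [Finset.mem_range]
    omega
  have hfib : ∀ i ∈ Finset.range (n + 1), matPow G i x y =
      ∑ p ∈ hfinAll.toFinset.filter (fun p => p.length - 1 = i), pathWeight G p := by
    intro i _
    rw [matPow_eq_finsum G hG i x y]
    apply finsum_mem_eq_sum_of_inter_support_eq
    ext p
    simp only [Set.mem_inter_iff, Set.mem_setOf_eq, Function.mem_support, Finset.coe_filter,
      Set.Finite.mem_toFinset]
    constructor
    · rintro ⟨⟨hp, hlen⟩, hw⟩
      exact ⟨⟨⟨hp, hw⟩, by omega⟩, hw⟩
    · rintro ⟨⟨⟨hp, hw⟩, hlen⟩, -⟩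
      have h1 : p ≠ [] := hp.1
      have h2 : 1 ≤ p.length := List.length_pos_iff.mpr h1
      exact ⟨⟨hp, by omega⟩, hw⟩
  calc gstar G x y = ∑ p ∈ hfinAll.toFinset, pathWeight G p :=
        finsum_mem_eq_sum _ hfinAll
    _ = ∑ i ∈ Finset.range (n + 1),
          ∑ p ∈ hfinAll.toFinset.filter (fun p => p.length - 1 = i), pathWeight G p :=
        (Finset.sum_fiberwise_of_maps_to hmaps _).symm
    _ = ∑ i ∈ Finset.range (n + 1), matPow G i x y :=
        Finset.sum_congr rfl (fun i hi => (hfib i hi).symm)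

/-- For an acyclic grade graph `G` with `n = |Nodes(G)|`,
`G* = Σ_{i=0}^{n} Gⁱ` pointwise. -/
theorem gstar_eq_sum_pows {V R : Type*} [Semiring R] [PartialOrder R]
    (hadd : ∀ a b c d : R, a ≤ b → c ≤ d → a + c ≤ b + d)
    (hmul : ∀ a b c d : R, a ≤ b → c ≤ d → a * c ≤ b * d)
    (hzero : ∀ r : R, r ≤ 0 → r = 0)
    (G : V → V → R) (hG : {q : V × V | G q.1 q.2 ≠ 0}.Finite)
    (hacyc : Acyclic G) :
    ∀ x y : V, gstar G x y = ∑ i ∈ Finset.range ((Nodes G).ncard + 1), matPow G i x y :=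
  gstar_eq_sum_pows' G hG hacyc
end
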